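/- Let 𝒜 be a Grothendieck category with a fixed generator X. For every object Y of 𝒜 there is a cardinal κ such that for every epimorphism U → Y in 𝒜 there is a subobject U′ ⊆ U with |U′| ≤ κ and such that the composite U′ → U → Y is an epimorphism. -/

import Mathlib

open CategoryTheory Limits

universe v u

section Aux

variable {C : Type u} [Category.{v} C] [Abelian C] [HasColimits C]

instance aux_small [WellPowered.{v} C] (Z : C) : Small.{v} (Subobject Z) :=
  WellPowered.subobject_small Z

/-- If `A ≠ ⊤` is a proper subobject of the separator `X` and `p : P ⟶ X` is an epi,
then some `f : X ⟶ P` has `f ≫ p` not factoring through `A`. -/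
lemma aux_exists_not_factors (X : C) (hX : IsSeparator X) {P : C} (p : P ⟶ X) [Epi p]
    (A : Subobject X) (hA : A ≠ ⊤) : ∃ f : X ⟶ P, ¬ A.Factors (f ≫ p) := by
  by_contra hcon
  push_neg at hcon
  apply hA
  -- show the cokernel projection of `A.arrow` is zero
  have hπ : p ≫ cokernel.π A.arrow = 0 := by
    apply hX.def
    intro f
    rw [comp_zero, ← Category.assoc, ← Subobject.factorThru_arrow _ _ (hcon f),
      Category.assoc, cokernel.condition, comp_zero]
  have hπ0 : cokernel.π A.arrow = 0 := by
    rw [← cancel_epi p, hπ, comp_zero]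
  haveI : Epi A.arrow := Preadditive.epi_of_cokernel_zero hπ0
  haveI : IsIso A.arrow := isIso_of_mono_of_epi _
  exact Subobject.eq_top_of_isIso_arrow A

/-- Key lemma: an epimorphism onto the separator `X` admits a `Shrink (Subobject X)`-indexed
family of maps from `X` whose combined composite with `p` is an epimorphism. -/
lemma aux_key (X : C) (hX : IsSeparator X) [WellPowered.{v} C] {P : C} (p : P ⟶ X) [Epi p] :
    ∃ f : Shrink.{v} (Subobject X) → (X ⟶ P),
      Epi (Sigma.desc (fun A => f A ≫ p) :
        (∐ fun _ : Shrink.{v} (Subobject X) => X) ⟶ X) := by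
  classical
  -- choice function over subobjects of `X`
  let c : Subobject X → (X ⟶ P) := fun A =>
    if hA : A ≠ ⊤ then (aux_exists_not_factors X hX p A hA).choose else 0
  have hc : ∀ A : Subobject X, A ≠ ⊤ → ¬ A.Factors (c A ≫ p) := by
    intro A hA
    simpa only [c, dif_pos hA] using (aux_exists_not_factors X hX p A hA).choose_spec
  refine ⟨fun A => c ((equivShrink (Subobject X)).symm A), ?_⟩
  set q : (∐ fun _ : Shrink.{v} (Subobject X) => X) ⟶ X :=
    Sigma.desc (fun A => c ((equivShrink (Subobject X)).symm A) ≫ p) with hq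
  -- the image of `q` must be all of `X`
  have hB : imageSubobject q = ⊤ := by
    by_contra hB
    apply hc (imageSubobject q) hB
    have : c (imageSubobject q) ≫ p =
        Sigma.ι (fun _ : Shrink.{v} (Subobject X) => X)
          (equivShrink (Subobject X) (imageSubobject q)) ≫ q := by
      rw [hq, Sigma.ι_desc, Equiv.symm_apply_apply]
    rw [this]
    exact imageSubobject_factors_comp_self q _
  haveI : IsIso (imageSubobject q).arrow := by
    rw [Subobject.isIso_arrow_iff_eq_top]; exact hB
  rw [← imageSubobject_arrow_comp q]
  exact epi_comp _ _

end Aux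

/-- In a Grothendieck category with generator `X`, for every object `Y` there is a
cardinal `κ` such that every epimorphism `U → Y` admits a subobject `U' ⊆ U` with
`|U'| ≤ κ` whose composite `U' → U → Y` is still an epimorphism. -/
theorem statement1 {C : Type u} [Category.{v} C] [Abelian C] [HasColimits C] [AB5 C]
    (X : C) (hX : IsSeparator X) (Y : C) :
    ∃ κ : Cardinal.{v}, ∀ (U : C) (g : U ⟶ Y), Epi g →
      ∃ U' : Subobject U, Cardinal.mk (X ⟶ (U' : C)) ≤ κ ∧ Epi (U'.arrow ≫ g) := by
  classical
  haveI : WellPowered.{v} C := wellPowered_of_isDetector X hX.isDetector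
  -- the fixed "test" coproduct
  set ι : Type v := (X ⟶ Y) × Shrink.{v} (Subobject X) with hι
  set T : C := ∐ (fun _ : ι => X) with hT
  refine ⟨⨆ S : Shrink.{v} (Subobject T),
    Cardinal.mk (X ⟶ cokernel ((equivShrink (Subobject T)).symm S).arrow), ?_⟩
  intro U g hg
  haveI : Epi g := hg
  -- for each `s : X ⟶ Y`, pull `g` back along `s` and apply the key lemma
  have key : ∀ s : X ⟶ Y, ∃ f : Shrink.{v} (Subobject X) → (X ⟶ pullback g s),
      Epi (Sigma.desc (fun A => f A ≫ pullback.snd g s) :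
        (∐ fun _ : Shrink.{v} (Subobject X) => X) ⟶ X) := fun s =>
    aux_key X hX (pullback.snd g s)
  choose f hf using key
  set h : T ⟶ U := Sigma.desc (fun i : ι => f i.1 i.2 ≫ pullback.fst g i.1) with hh
  haveI : Epi (h ≫ g) := by
    constructor
    intro Z a b w
    apply hX.def
    intro s
    have : Sigma.desc (fun A => f s A ≫ pullback.snd g s) ≫ s ≫ a =
        Sigma.desc (fun A => f s A ≫ pullback.snd g s) ≫ s ≫ b := by
      apply Sigma.hom_ext
      intro A
      have hcomp : ∀ z : Y ⟶ Z,
          Sigma.ι (fun _ : Shrink.{v} (Subobject X) => X) A ≫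
            Sigma.desc (fun A => f s A ≫ pullback.snd g s) ≫ s ≫ z =
          Sigma.ι (fun _ : ι => X) (⟨s, A⟩ : ι) ≫ (h ≫ g) ≫ z := by
        intro z
        rw [hh]
        simp only [← Category.assoc, Sigma.ι_desc]
        simp only [Category.assoc]
        rw [← pullback.condition_assoc]
      rw [hcomp a, hcomp b, w]
    haveI := hf s
    exact (cancel_epi (Sigma.desc fun A => f s A ≫ pullback.snd g s)).mp ‹_›
  refine ⟨imageSubobject h, ?_, ?_⟩
  · -- cardinality bound
    have e : ((imageSubobject h : C)) ≅ cokernel (kernelSubobject h).arrow :=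
      imageSubobjectIso h ≪≫ (Abelian.coimageIsoImage' h).symm ≪≫
        (cokernelEpiComp (kernelSubobjectIso h).hom (kernel.ι h)).symm ≪≫
        cokernelIsoOfEq (kernelSubobject_arrow h)
    have heq : Cardinal.mk (X ⟶ (imageSubobject h : C)) =
        Cardinal.mk (X ⟶ cokernel
          ((equivShrink (Subobject T)).symm (equivShrink (Subobject T) (kernelSubobject h))).arrow) := by
      rw [Equiv.symm_apply_apply]
      exact Cardinal.mk_congr ((Iso.refl X).homCongr e)
    rw [heq]
    exact le_ciSup (Cardinal.bddAbove_range _) (equivShrink (Subobject T) (kernelSubobject h))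
  · -- epi part
    have hfac : factorThruImageSubobject h ≫ (imageSubobject h).arrow ≫ g = h ≫ g := by
      rw [← Category.assoc, imageSubobject_arrow_comp]
    haveI : Epi (factorThruImageSubobject h ≫ (imageSubobject h).arrow ≫ g) := by
      rw [hfac]; infer_instance
    exact epi_of_epi (factorThruImageSubobject h) _
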